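/- For all integers a ≥ 1, d ≥ 1 and b ≥ 2, one has |[2*(a−1), b, 2, 2*(d−1)]| = (a + d + 1) + (d + 1)·a·(b − 2). -/

import Mathlib

/-- Hirzebruch–Jung numerator: |[]| = 1, |[n]| = n,
|[n₁, n₂, …]| = n₁·|[n₂, …]| − |[n₃, …]|. -/
def hj : List ℤ → ℤ
  | [] => 1
  | [n] => n
  | n :: m :: l => n * hj (m :: l) - hj l

lemma hj_cons_cons (x y : ℤ) (l : List ℤ) : hj (x :: y :: l) = x * hj (y :: l) - hj l := rfl

lemma hj_rep_append : ∀ (n : ℕ) (x : ℤ) (l : List ℤ),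
    hj (List.replicate n 2 ++ x :: l) = (n + 1) * hj (x :: l) - n * hj l := by
  intro n
  induction n using Nat.twoStepInduction with
  | zero => intro x l; simp
  | one => intro x l; simp [List.replicate, hj_cons_cons]
  | more n ih1 ih2 =>
    intro x l
    have h : List.replicate (n + 2) (2 : ℤ) ++ x :: l
        = 2 :: 2 :: (List.replicate n 2 ++ x :: l) := by
      simp [List.replicate_succ]
    rw [h, hj_cons_cons]
    have h2 : (2 : ℤ) :: (List.replicate n 2 ++ x :: l)
        = List.replicate (n + 1) 2 ++ x :: l := by
      simp [List.replicate_succ]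
    rw [h2, ih2, ih1]
    push_cast
    ring

lemma hj_rep (n : ℕ) : hj (List.replicate n (2 : ℤ)) = n + 1 := by
  cases n with
  | zero => rfl
  | succ m =>
    rw [List.replicate_succ', hj_rep_append m 2 []]
    show ((m : ℤ) + 1) * 2 - m * 1 = (m + 1 : ℕ) + 1
    push_cast; ring

theorem hj_two_a_b_two_two_d (a d b : ℤ) (ha : 1 ≤ a) (hd : 1 ≤ d) (hb : 2 ≤ b) :
    hj (List.replicate (a - 1).toNat 2 ++ [b, 2] ++ List.replicate (d - 1).toNat 2) =
      (a + d + 1) + (d + 1) * a * (b - 2) := by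
  set m := (a - 1).toNat with hmdef
  set k := (d - 1).toNat with hkdef
  have hm : (m : ℤ) = a - 1 := Int.toNat_of_nonneg (by omega)
  have hk : (k : ℤ) = d - 1 := Int.toNat_of_nonneg (by omega)
  have hl : List.replicate m (2 : ℤ) ++ [b, 2] ++ List.replicate k 2
      = List.replicate m 2 ++ b :: 2 :: List.replicate k 2 := by
    simp
  rw [hl, hj_rep_append m b (2 :: List.replicate k 2), hj_cons_cons,
    show (2 : ℤ) :: List.replicate k 2 = List.replicate (k + 1) 2 from
      (List.replicate_succ (a := 2) (n := k)).symm,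
    hj_rep, hj_rep]
  rw [show a = (m : ℤ) + 1 by omega, show d = (k : ℤ) + 1 by omega]
  push_cast
  ring
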